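/- Let K > 1, L > 0, 0 < z, 0 ≤ δ ≤ z, and suppose the balance condition K·L·δ = (L + (K−1)δ)(z − δ) holds. Then for every α ∈ [0, z], (L + (K−1)(L − α(1 − δ/z))) / (L + (K−1)δ(1 − α/z)) = K·L / (L + (K−1)δ); that is, under the balance condition the cost-ratio function is constant in α. -/
import Mathlib


/-- Under the balance condition `K·L·δ = (L + (K−1)δ)(z − δ)`, the cost-ratio function
is constant in `α`: for every `α ∈ [0, z]`,
`(L + (K−1)(L − α(1 − δ/z))) / (L + (K−1)δ(1 − α/z)) = K·L/(L + (K−1)δ)`. -/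
theorem stmt_15 (K L z δ : ℝ) (hK : 1 < K) (hL : 0 < L) (hz : 0 < z)
    (hδ0 : 0 ≤ δ) (hδz : δ ≤ z)
    (hbal : K * L * δ = (L + (K - 1) * δ) * (z - δ)) :
    ∀ α ∈ Set.Icc (0 : ℝ) z,
      (L + (K - 1) * (L - α * (1 - δ / z))) / (L + (K - 1) * δ * (1 - α / z)) =
        K * L / (L + (K - 1) * δ) := by
  intro α hα
  obtain ⟨hα0, hαz⟩ := hα
  have hK1 : 0 < K - 1 := by linarith
  have hden1 : 0 < L + (K - 1) * δ * (1 - α / z) := by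
    have h1 : 0 ≤ 1 - α / z := by
      have := (div_le_one hz).mpr hαz; linarith
    nlinarith [mul_nonneg (mul_nonneg hK1.le hδ0) h1]
  have hden2 : 0 < L + (K - 1) * δ := by nlinarith
  rw [div_eq_div_iff hden1.ne' hden2.ne']
  field_simp
  linear_combination ((K - 1) * α) * hbal
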